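/- Let a : ℝⁿ → ℝ be a C², ℤⁿ-periodic, nonnegative function. Then there exists a constant C > 0 such that |Da(x)|² ≤ C·a(x) for all x ∈ ℝⁿ. -/

import Mathlib

open MeasureTheory Finset

noncomputable section

/-- Partial derivative of `f` at `x` in the `i`-th coordinate direction. -/
def pd {n : ℕ} (f : (Fin n → ℝ) → ℝ) (i : Fin n) (x : Fin n → ℝ) : ℝ :=
  fderiv ℝ f x (Pi.single i 1)

/-- Squared euclidean norm of the (spatial) gradient, `|Df(x)|²`. -/
def gradSq {n : ℕ} (f : (Fin n → ℝ) → ℝ) (x : Fin n → ℝ) : ℝ :=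
  ∑ i, (pd f i x) ^ 2

/-- Laplacian of `f` at `x`. -/
def lap {n : ℕ} (f : (Fin n → ℝ) → ℝ) (x : Fin n → ℝ) : ℝ :=
  ∑ i, pd (pd f i) i x

/-- Sum of squares of all second spatial derivatives, `|D²f(x)|²`. -/
def hessSq {n : ℕ} (f : (Fin n → ℝ) → ℝ) (x : Fin n → ℝ) : ℝ :=
  ∑ i, ∑ j, (pd (pd f i) j x) ^ 2

/-- `ℤⁿ`-periodicity of a function on `ℝⁿ`. -/
def ZPer {n : ℕ} (f : (Fin n → ℝ) → ℝ) : Prop :=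
  ∀ (x : Fin n → ℝ) (k : Fin n → ℤ), f (x + fun i => (k i : ℝ)) = f x

/-- `i`-th component of `D_pH(x,p)`. -/
def DpH {n : ℕ} (H : (Fin n → ℝ) → (Fin n → ℝ) → ℝ) (x p : Fin n → ℝ) (i : Fin n) : ℝ :=
  fderiv ℝ (fun q => H x q) p (Pi.single i 1)

/-- `i`-th component of `D_xH(x,p)`. -/
def DxH {n : ℕ} (H : (Fin n → ℝ) → (Fin n → ℝ) → ℝ) (x p : Fin n → ℝ) (i : Fin n) : ℝ :=
  fderiv ℝ (fun y => H y p) x (Pi.single i 1)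

/-- `(i,j)` entry of the Hessian in `p`, `D²_{pp}H(x,p)`. -/
def D2pH {n : ℕ} (H : (Fin n → ℝ) → (Fin n → ℝ) → ℝ) (x p : Fin n → ℝ) (i j : Fin n) : ℝ :=
  fderiv ℝ (fun q => DpH H x q i) p (Pi.single j 1)

/-- Spatial gradient of a time-dependent function. -/
def Dsp {n : ℕ} (w : (Fin n → ℝ) → ℝ → ℝ) (x : Fin n → ℝ) (t : ℝ) : Fin n → ℝ :=
  fun i => pd (fun y => w y t) i x

/-- The unit cube `Q = [0,1]ⁿ`, a fundamental domain for the torus `𝕋ⁿ`. -/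
def cube (n : ℕ) : Set (Fin n → ℝ) := Set.Icc 0 1


set_option maxHeartbeats 1000000 in
private lemma fderiv_shift' {E F : Type*} [NormedAddCommGroup E] [NormedSpace ℝ E]
    [NormedAddCommGroup F] [NormedSpace ℝ F]
    (f : E → F) (hf : Differentiable ℝ f) (c x : E) :
    fderiv ℝ (fun y => f (y + c)) x = fderiv ℝ f (x + c) := by
  have h1 : HasFDerivAt (fun y => f (y + c)) (fderiv ℝ f (x + c)) x := by
    have := (hf (x + c)).hasFDerivAt.comp x ((hasFDerivAt_id x).add_const c)
    exact this
  exact h1.fderiv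

private lemma fderiv_per' {E F : Type*} [NormedAddCommGroup E] [NormedSpace ℝ E]
    [NormedAddCommGroup F] [NormedSpace ℝ F]
    (f : E → F) (hf : Differentiable ℝ f) (c : E) (h : ∀ x, f (x + c) = f x) (x : E) :
    fderiv ℝ f (x + c) = fderiv ℝ f x := by
  rw [← fderiv_shift' f hf c x]
  congr 1
  exact funext h

private lemma key1d' (f f' f'' : ℝ → ℝ) (K : ℝ) (hK : 0 < K)
    (hf : ∀ t, HasDerivAt f (f' t) t) (hf' : ∀ t, HasDerivAt f' (f'' t) t)
    (hbd : ∀ t, |f'' t| ≤ K) (hpos : ∀ t, 0 ≤ f t) :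
    (f' 0) ^ 2 ≤ 4 * K * f 0 := by
  set t0 : ℝ := -(f' 0) / (2 * K) with ht0
  have h1 : ∀ s : ℝ, |f' s - f' 0| ≤ K * |s| := by
    intro s
    have := convex_univ.norm_image_sub_le_of_norm_hasDerivWithin_le
      (f := f') (f' := f'') (C := K) (fun t _ => (hf' t).hasDerivWithinAt)
      (fun t _ => by simpa using hbd t) (Set.mem_univ 0) (Set.mem_univ s)
    simpa [Real.norm_eq_abs] using this
  set g : ℝ → ℝ := fun t => f t - f 0 - f' 0 * t with hgdef
  have hg' : ∀ t, HasDerivAt g (f' t - f' 0) t := by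
    intro t
    have h2 : HasDerivAt (fun t : ℝ => f' 0 * t) (f' 0) t := by
      simpa using (hasDerivAt_id t).const_mul (f' 0)
    exact ((hf t).sub_const (f 0)).sub h2
  have h2 : |g t0| ≤ K * |t0| * |t0| := by
    have hb : ∀ s ∈ Set.uIcc (0:ℝ) t0, ‖f' s - f' 0‖ ≤ K * |t0| := by
      intro s hs
      have hs' : |s| ≤ |t0| := by
        rcases Set.mem_uIcc.mp hs with ⟨hA, hB⟩ | ⟨hA, hB⟩ <;>
          rw [abs_le] <;> constructor <;>
          nlinarith [le_abs_self t0, neg_abs_le t0, abs_nonneg t0]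
      calc ‖f' s - f' 0‖ ≤ K * |s| := h1 s
        _ ≤ K * |t0| := by nlinarith
    have := (convex_uIcc (0:ℝ) t0).norm_image_sub_le_of_norm_hasDerivWithin_le
      (fun s _ => (hg' s).hasDerivWithinAt) hb Set.left_mem_uIcc Set.right_mem_uIcc
    have hg0 : g 0 = 0 := by simp [hgdef]
    simpa [hg0, Real.norm_eq_abs] using this
  have habs : |t0| * |t0| = t0 * t0 := abs_mul_abs_self t0
  have h2' : |g t0| ≤ K * (t0 * t0) := by
    calc |g t0| ≤ K * |t0| * |t0| := h2
      _ = K * (t0 * t0) := by rw [mul_assoc, habs]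
  have e1 : 2 * K * t0 = -(f' 0) := by
    rw [ht0]; field_simp
  have h3 : g t0 ≤ K * (t0 * t0) := by
    calc g t0 ≤ |g t0| := le_abs_self _
      _ ≤ K * (t0 * t0) := h2'
  have h0 := hpos t0
  have hgt0 : g t0 = f t0 - f 0 - f' 0 * t0 := rfl
  nlinarith [h0, h3, e1, hK, sq_nonneg (f' 0)]

set_option maxHeartbeats 1000000 in
theorem stmt_0 {n : ℕ} (a : (Fin n → ℝ) → ℝ)
    (ha : ContDiff ℝ 2 a) (haper : ZPer a) (hann : ∀ x, 0 ≤ a x) :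
    ∃ C > 0, ∀ x, gradSq a x ≤ C * a x := by
  have hdiffa : Differentiable ℝ a := ha.differentiable (by norm_num)
  set A := fderiv ℝ a with hA
  set B := fderiv ℝ A with hB
  have hA1 : ContDiff ℝ 1 A := ha.fderiv_right (by norm_num)
  have hdiffA : Differentiable ℝ A := hA1.differentiable one_ne_zero
  have hBcont : Continuous B := hA1.continuous_fderiv one_ne_zero
  obtain ⟨M, hM⟩ := (isCompact_Icc (a := (0 : Fin n → ℝ)) (b := 1)).exists_bound_of_continuousOn
    (f := B) hBcont.continuousOn
  have h0mem : (0 : Fin n → ℝ) ∈ Set.Icc (0 : Fin n → ℝ) 1 :=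
    Set.mem_Icc.mpr ⟨le_refl _, zero_le_one⟩
  have hM0 : 0 ≤ M := (norm_nonneg _).trans (hM 0 h0mem)
  have hAper : ∀ (x : Fin n → ℝ) (k : Fin n → ℤ),
      A (x + fun i => (k i : ℝ)) = A x := fun x k =>
    fderiv_per' a hdiffa _ (fun y => haper y k) x
  have hBper : ∀ (x : Fin n → ℝ) (k : Fin n → ℤ),
      B (x + fun i => (k i : ℝ)) = B x := fun x k =>
    fderiv_per' A hdiffA _ (fun y => hAper y k) x
  have hMall : ∀ y, ‖B y‖ ≤ M := by
    intro y
    have hmem : (y + fun i => ((-⌊y i⌋ : ℤ) : ℝ)) ∈ Set.Icc (0 : Fin n → ℝ) 1 := by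
      constructor <;> intro i <;> simp only [Pi.add_apply, Pi.zero_apply, Pi.one_apply] <;>
        push_cast
      · linarith [Int.fract_nonneg (y i), Int.self_sub_floor (y i)]
      · linarith [(Int.fract_lt_one (y i)).le, Int.self_sub_floor (y i)]
    calc ‖B y‖ = ‖B (y + fun i => ((-⌊y i⌋ : ℤ) : ℝ))‖ := by rw [hBper]
      _ ≤ M := hM _ hmem
  refine ⟨4 * (M + 1), by linarith, fun x => ?_⟩
  by_cases hS : gradSq a x = 0
  · rw [hS]; nlinarith [hann x, hM0]
  set v : Fin n → ℝ := fun i => pd a i x with hv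
  have hSnn : 0 ≤ gradSq a x := Finset.sum_nonneg fun i _ => sq_nonneg _
  have hSpos : 0 < gradSq a x := lt_of_le_of_ne hSnn (Ne.symm hS)
  set S := gradSq a x with hSdef
  set l : ℝ → (Fin n → ℝ) := fun t => x + t • v with hl
  have hlder : ∀ t, HasDerivAt l v t := by
    intro t
    have := ((hasDerivAt_id t).smul_const v).const_add x
    rw [one_smul] at this
    exact this
  have hf : ∀ t, HasDerivAt (fun t => a (l t)) (A (l t) v) t := fun t =>
    (hdiffa (l t)).hasFDerivAt.comp_hasDerivAt t (hlder t)
  have hf' : ∀ t, HasDerivAt (fun t => A (l t) v) (B (l t) v v) t := by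
    intro t
    have h1 : HasFDerivAt (fun y => A y v)
        ((ContinuousLinearMap.apply ℝ ℝ v).comp (B (l t))) (l t) :=
      (ContinuousLinearMap.apply ℝ ℝ v).hasFDerivAt.comp (l t) (hdiffA (l t)).hasFDerivAt
    have := h1.comp_hasDerivAt t (hlder t)
    exact this
  have hvS : ‖v‖ * ‖v‖ ≤ S := by
    have hnv : ‖v‖ ≤ Real.sqrt S := by
      rw [pi_norm_le_iff_of_nonneg (Real.sqrt_nonneg S)]
      intro i
      rw [Real.norm_eq_abs, ← Real.sqrt_sq_eq_abs]
      exact Real.sqrt_le_sqrt (Finset.single_le_sum (f := fun j => (pd a j x) ^ 2)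
        (fun j _ => sq_nonneg _) (Finset.mem_univ i))
    calc ‖v‖ * ‖v‖ ≤ Real.sqrt S * Real.sqrt S :=
          mul_le_mul hnv hnv (norm_nonneg _) (Real.sqrt_nonneg _)
      _ = S := Real.mul_self_sqrt hSnn
  have hbd : ∀ t, |B (l t) v v| ≤ (M + 1) * S := by
    intro t
    have h1 : ‖B (l t) v v‖ ≤ ‖B (l t)‖ * ‖v‖ * ‖v‖ := by
      calc ‖B (l t) v v‖ ≤ ‖B (l t) v‖ * ‖v‖ := (B (l t) v).le_opNorm v
        _ ≤ ‖B (l t)‖ * ‖v‖ * ‖v‖ :=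
          mul_le_mul_of_nonneg_right ((B (l t)).le_opNorm v) (norm_nonneg _)
    have h2 : ‖B (l t)‖ * ‖v‖ * ‖v‖ ≤ M * S := by
      have := hMall (l t)
      nlinarith [norm_nonneg (B (l t)), norm_nonneg v, hvS]
    rw [Real.norm_eq_abs] at h1
    nlinarith
  have hKpos : 0 < (M + 1) * S := by positivity
  have key := key1d' (fun t => a (l t)) (fun t => A (l t) v) (fun t => B (l t) v v)
    ((M + 1) * S) hKpos hf hf' hbd (fun t => hann (l t))
  have hl0 : l 0 = x := by simp [hl]
  have hAxv : A x v = S := by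
    have hdec : v = ∑ i, Pi.single i (v i) := (Finset.univ_sum_single v).symm
    calc A x v = A x (∑ i, Pi.single i (v i)) := by rw [← hdec]
      _ = ∑ i, A x (Pi.single i (v i)) := map_sum _ _ _
      _ = ∑ i, (pd a i x) ^ 2 := by
          refine Finset.sum_congr rfl fun i _ => ?_
          have hsingle : Pi.single i (v i) = v i • Pi.single (M := fun _ : Fin n => ℝ) i (1:ℝ) := by
            have h := Pi.single_smul (f := fun _ : Fin n => ℝ) i (v i) (1:ℝ)
            simpa using h
          rw [hsingle, _root_.map_smul]
          have hpd : A x (Pi.single i (1:ℝ)) = pd a i x := rfl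
          rw [smul_eq_mul, hpd, hv]
          ring
      _ = S := rfl
  have key' : (A (l 0)) v ^ 2 ≤ 4 * ((M + 1) * S) * a (l 0) := key
  rw [hl0, hAxv] at key'
  nlinarith [key', hSpos, hann x]

end
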